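/- Let A be an n×n real symmetric positive semidefinite matrix, let vec(A) ∈ ℝ^{n²} be its vectorization and A ⊗ A its Kronecker product with itself (an n²×n² matrix). Then rank(A) = min { t ≥ 0 : t·(A ⊗ A) − vec(A)vec(A)^T is positive semidefinite }. -/

import Mathlib

open Matrix Kronecker

variable {m : Type*} [Fintype m] [DecidableEq m]

-- vectorization of B C Bᵀ
lemma aux_vec_eq (B C : Matrix m m ℝ) :
    (fun p : m × m => (B * C * Bᵀ) p.1 p.2)
      = (B ⊗ₖ B) *ᵥ (fun p : m × m => C p.1 p.2) := by
  funext p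
  simp only [mulVec, dotProduct, kroneckerMap_apply, mul_apply, transpose_apply,
    Fintype.sum_prod_type, Finset.sum_mul]
  rw [Finset.sum_comm]
  refine Finset.sum_congr rfl fun k _ => Finset.sum_congr rfl fun l _ => by ring

lemma aux_vmv (B : Matrix m m ℝ) (v : m → ℝ) :
    vecMulVec (B *ᵥ v) (B *ᵥ v) = B * vecMulVec v v * Bᵀ := by
  ext i j
  simp only [vecMulVec_apply, mulVec, dotProduct, mul_apply, transpose_apply,
    Finset.sum_mul, Finset.mul_sum]
  refine Finset.sum_congr rfl fun k _ => Finset.sum_congr rfl fun l _ => by ring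

lemma aux_qf (d : m → ℝ) (t : ℝ) (x : m × m → ℝ) :
    x ⬝ᵥ ((t • (diagonal d ⊗ₖ diagonal d)
        - vecMulVec (fun p : m × m => diagonal d p.1 p.2)
            (fun p : m × m => diagonal d p.1 p.2)) *ᵥ x)
      = t * ∑ p : m × m, d p.1 * d p.2 * x p ^ 2 - (∑ k, d k * x (k, k)) ^ 2 := by
  have hdiag : (fun p : m × m => diagonal d p.1 p.2) ⬝ᵥ x = ∑ k, d k * x (k, k) := by
    simp only [dotProduct, Fintype.sum_prod_type, diagonal_apply, ite_mul, zero_mul]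
    simp
  rw [sub_mulVec, dotProduct_sub, smul_mulVec, dotProduct_smul,
    diagonal_kronecker_diagonal]
  congr 1
  · simp only [smul_eq_mul]
    congr 1
    simp only [dotProduct, mulVec_diagonal]
    exact Finset.sum_congr rfl fun p _ => by ring
  · have : vecMulVec (fun p : m × m => diagonal d p.1 p.2)
        (fun p : m × m => diagonal d p.1 p.2) *ᵥ x
        = ((fun p : m × m => diagonal d p.1 p.2) ⬝ᵥ x)
            • (fun p : m × m => diagonal d p.1 p.2) := by
      ext q
      simp only [vecMulVec, mulVec, dotProduct, of_apply, Pi.smul_apply, smul_eq_mul,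
        Finset.mul_sum]
      rw [Finset.sum_mul]
      exact Finset.sum_congr rfl fun p _ => by ring
    rw [this, dotProduct_smul, hdiag]
    simp only [smul_eq_mul, sq]
    rw [dotProduct_comm, hdiag]

lemma aux_cs (d : m → ℝ) (hd : ∀ i, 0 ≤ d i) (x : m × m → ℝ) :
    (∑ k, d k * x (k, k)) ^ 2
      ≤ ((Finset.univ.filter fun k => d k ≠ 0).card : ℝ)
          * ∑ p : m × m, d p.1 * d p.2 * x p ^ 2 := by
  set s := Finset.univ.filter fun k => d k ≠ 0 with hs
  have h1 : ∑ k, d k * x (k, k) = ∑ k ∈ s, 1 * (d k * x (k, k)) := by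
    simp only [one_mul, hs]
    rw [Finset.sum_filter_of_ne]
    intro k _ h hk
    exact h (by simp [hk])
  have h2 := Finset.sum_mul_sq_le_sq_mul_sq s (fun _ => 1) (fun k => d k * x (k, k))
  have h3 : ∑ k ∈ s, (d k * x (k, k)) ^ 2 ≤ ∑ p : m × m, d p.1 * d p.2 * x p ^ 2 := by
    calc ∑ k ∈ s, (d k * x (k, k)) ^ 2
        ≤ ∑ k, (d k * x (k, k)) ^ 2 :=
          Finset.sum_le_sum_of_subset_of_nonneg (Finset.subset_univ s)
            (fun k _ _ => sq_nonneg _)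
      _ = ∑ k, d k * d k * x (k, k) ^ 2 :=
          Finset.sum_congr rfl fun k _ => by ring
      _ = ∑ p ∈ Finset.univ.image (fun k : m => (k, k)), d p.1 * d p.2 * x p ^ 2 := by
          rw [Finset.sum_image (fun a _ b _ h => (Prod.mk.injEq _ _ _ _ ▸ h).1)]
      _ ≤ ∑ p : m × m, d p.1 * d p.2 * x p ^ 2 :=
          Finset.sum_le_sum_of_subset_of_nonneg (Finset.subset_univ _)
            (fun p _ _ => mul_nonneg (mul_nonneg (hd _) (hd _)) (sq_nonneg _))
  calc (∑ k, d k * x (k, k)) ^ 2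
      = (∑ k ∈ s, 1 * (d k * x (k, k))) ^ 2 := by rw [h1]
    _ ≤ (∑ _k ∈ s, (1:ℝ) ^ 2) * ∑ k ∈ s, (d k * x (k, k)) ^ 2 := h2
    _ = (s.card : ℝ) * ∑ k ∈ s, (d k * x (k, k)) ^ 2 := by simp
    _ ≤ (s.card : ℝ) * ∑ p : m × m, d p.1 * d p.2 * x p ^ 2 :=
        mul_le_mul_of_nonneg_left h3 (by positivity)

lemma aux_psd (d : m → ℝ) (hd : ∀ i, 0 ≤ d i) :
    ((((Finset.univ.filter fun k => d k ≠ 0).card : ℝ)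
        • (diagonal d ⊗ₖ diagonal d))
      - vecMulVec (fun p : m × m => diagonal d p.1 p.2)
          (fun p : m × m => diagonal d p.1 p.2)).PosSemidef := by
  apply PosSemidef.of_dotProduct_mulVec_nonneg
  · show _ᴴ = _
    rw [conjTranspose_eq_transpose_of_trivial, transpose_sub, transpose_smul,
      ← kroneckerMap_transpose, diagonal_transpose]
    congr 1
    ext p q
    simp only [transpose_apply, vecMulVec_apply]
    exact mul_comm _ _
  · intro x
    have hx : star x = x := by ext p; exact star_trivial _
    rw [hx, aux_qf]
    have := aux_cs d hd x
    linarith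

lemma aux_lb (d : m → ℝ) (hd : ∀ i, 0 ≤ d i) (t : ℝ) (ht : 0 ≤ t)
    (h : 0 ≤ (fun p : m × m => diagonal (fun k => if d k ≠ 0 then (d k)⁻¹ else 0) p.1 p.2)
        ⬝ᵥ (((t • (diagonal d ⊗ₖ diagonal d))
          - vecMulVec (fun p : m × m => diagonal d p.1 p.2)
              (fun p : m × m => diagonal d p.1 p.2))
          *ᵥ (fun p : m × m => diagonal (fun k => if d k ≠ 0 then (d k)⁻¹ else 0) p.1 p.2))) :
    ((Finset.univ.filter fun k => d k ≠ 0).card : ℝ) ≤ t := by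
  set g : m → ℝ := fun k => if d k ≠ 0 then (d k)⁻¹ else 0 with hg
  set c : ℝ := ((Finset.univ.filter fun k => d k ≠ 0).card : ℝ) with hc
  rw [aux_qf] at h
  have hS1 : ∑ p : m × m, d p.1 * d p.2 * (diagonal g p.1 p.2) ^ 2 = c := by
    simp only [Fintype.sum_prod_type, diagonal_apply]
    have : ∀ k l : m, d k * d l * (if k = l then g k else 0) ^ 2
        = if k = l then d k * d k * g k ^ 2 else 0 := by
      intro k l
      split
      · subst ‹k = l›; ring
      · ring
    simp only [this, Finset.sum_ite_eq, Finset.mem_univ, if_true]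
    rw [hc, Finset.card_filter]
    push_cast
    refine Finset.sum_congr rfl fun k _ => ?_
    by_cases hk : d k = 0
    · simp [hg, hk]
    · simp only [hg, hk, ne_eq, not_false_iff, if_true]
      field_simp
  have hS2 : ∑ k, d k * diagonal g k k = c := by
    simp only [diagonal_apply_eq]
    rw [hc, Finset.card_filter]
    push_cast
    refine Finset.sum_congr rfl fun k _ => ?_
    by_cases hk : d k = 0
    · simp [hg, hk]
    · simp only [hg, hk, ne_eq, not_false_iff, if_true]
      field_simp
  rw [hS1, hS2] at h
  have hc0 : 0 ≤ c := by positivity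
  rcases eq_or_lt_of_le hc0 with hc' | hc'
  · linarith
  · nlinarith

/-- for an `n×n` real positive semidefinite matrix `A`,
`rank(A) = min { t ≥ 0 : vec(A)vec(A)ᵀ ⪯ t·(A ⊗ A) }`. -/
theorem stmt17 {n : ℕ} (A : Matrix (Fin n) (Fin n) ℝ) (hA : A.PosSemidef) :
    (A.rank : ℝ) = sInf {t : ℝ | 0 ≤ t ∧
      (t • (A ⊗ₖ A) -
        Matrix.vecMulVec (fun p : Fin n × Fin n => A p.1 p.2)
          (fun p : Fin n × Fin n => A p.1 p.2)).PosSemidef} := by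
  classical
  have hH : A.IsHermitian := hA.1
  set d : Fin n → ℝ := hH.eigenvalues with hd
  have hdpos : ∀ i, 0 ≤ d i := fun i => hA.eigenvalues_nonneg i
  set U : Matrix (Fin n) (Fin n) ℝ := (hH.eigenvectorUnitary : Matrix (Fin n) (Fin n) ℝ)
    with hU
  have hspec : A = U * diagonal d * Uᵀ := by
    have h := hH.spectral_theorem
    simp only [Unitary.conjStarAlgAut_apply, Unitary.coe_star, star_eq_conjTranspose,
      conjTranspose_eq_transpose_of_trivial] at h
    simpa [Function.comp] using h
  have hUo : Uᵀ * U = 1 := by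
    have h : star U * U = 1 := Matrix.mem_unitaryGroup_iff'.mp hH.eigenvectorUnitary.2
    rwa [star_eq_conjTranspose, conjTranspose_eq_transpose_of_trivial] at h
  set B : Matrix (Fin n × Fin n) (Fin n × Fin n) ℝ := U ⊗ₖ U with hB
  have hBo : Bᵀ * B = 1 := by
    rw [hB, ← kroneckerMap_transpose, ← mul_kronecker_mul, hUo, one_kronecker_one]
  set dv : Fin n × Fin n → ℝ := fun p => diagonal d p.1 p.2 with hdv
  have hkron : A ⊗ₖ A = B * (diagonal d ⊗ₖ diagonal d) * Bᵀ := by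
    rw [hB, ← kroneckerMap_transpose, ← mul_kronecker_mul, ← mul_kronecker_mul, ← hspec]
  have hv : (fun p : Fin n × Fin n => A p.1 p.2) = B *ᵥ dv := by
    conv_lhs => rw [hspec]
    exact aux_vec_eq U (diagonal d)
  have hkey : ∀ t : ℝ, t • (A ⊗ₖ A) -
      Matrix.vecMulVec (fun p : Fin n × Fin n => A p.1 p.2)
        (fun p : Fin n × Fin n => A p.1 p.2)
      = B * (t • (diagonal d ⊗ₖ diagonal d) - vecMulVec dv dv) * Bᵀ := by
    intro t
    rw [hkron, hv, aux_vmv, Matrix.mul_sub, Matrix.sub_mul, mul_smul_comm, smul_mul_assoc]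
  have hrank : (A.rank : ℝ) = ((Finset.univ.filter fun k => d k ≠ 0).card : ℝ) := by
    rw [hH.rank_eq_card_non_zero_eigs]
    norm_cast
    exact Fintype.card_subtype _
  have hmem : (A.rank : ℝ) ∈ {t : ℝ | 0 ≤ t ∧
      (t • (A ⊗ₖ A) -
        Matrix.vecMulVec (fun p : Fin n × Fin n => A p.1 p.2)
          (fun p : Fin n × Fin n => A p.1 p.2)).PosSemidef} := by
    refine ⟨Nat.cast_nonneg _, ?_⟩
    rw [hkey, hrank, ← conjTranspose_eq_transpose_of_trivial]
    exact (aux_psd d hdpos).mul_mul_conjTranspose_same B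
  refine le_antisymm (le_csInf ⟨_, hmem⟩ ?_) (csInf_le ⟨0, fun t ht => ht.1⟩ hmem)
  rintro t ⟨ht0, hpsd⟩
  rw [hrank]
  set g : Fin n → ℝ := fun k => if d k ≠ 0 then (d k)⁻¹ else 0 with hg
  set e : Fin n × Fin n → ℝ := fun p => diagonal g p.1 p.2 with he
  have h0 := hpsd.dotProduct_mulVec_nonneg (B *ᵥ e)
  have hstar : star (B *ᵥ e) = B *ᵥ e := by ext p; exact star_trivial _
  rw [hstar, hkey] at h0
  set N : Matrix (Fin n × Fin n) (Fin n × Fin n) ℝ :=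
    t • (diagonal d ⊗ₖ diagonal d) - vecMulVec dv dv with hN
  have hcalc : (B *ᵥ e) ⬝ᵥ ((B * N * Bᵀ) *ᵥ (B *ᵥ e)) = e ⬝ᵥ (N *ᵥ e) := by
    have h1 : (B * N * Bᵀ) *ᵥ (B *ᵥ e) = B *ᵥ (N *ᵥ e) := by
      rw [mulVec_mulVec, mul_assoc (B * N), hBo, mul_one, ← mulVec_mulVec]
    rw [h1, dotProduct_mulVec, ← mulVec_transpose, mulVec_mulVec, hBo, one_mulVec]
  rw [hcalc] at h0
  exact aux_lb d hdpos t ht0 h0
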